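/- The space U of isometry classes of compact ultrametric spaces with the ultrametric Gromov–Hausdorff distance ρ_GHu is a complete metric space. -/

import Mathlib

noncomputable section
set_option linter.unusedSectionVars false

open Metric Set

private lemma le_add_eps' {a b : ℝ} (h : ∀ ε : ℝ, 0 < ε → a ≤ b + ε) : a ≤ b := by
  by_contra h'
  push_neg at h'
  have := h ((a - b) / 2) (by linarith)
  linarith

namespace UltraGlue

variable {Y Z₁ Z₂ : Type*} [MetricSpace Y] [MetricSpace Z₁] [MetricSpace Z₂] [Nonempty Y]

variable (φ₁ : Y → Z₁) (φ₂ : Y → Z₂)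

/-- Cross predistance for gluing two ultrametric spaces along a common subspace. -/
def cross (a : Z₁) (b : Z₂) : ℝ := ⨅ y, max (dist a (φ₁ y)) (dist (φ₂ y) b)

lemma cross_nonneg (a : Z₁) (b : Z₂) : 0 ≤ cross φ₁ φ₂ a b :=
  Real.iInf_nonneg fun _ => le_max_of_le_left dist_nonneg

lemma cross_le (a : Z₁) (b : Z₂) (y : Y) :
    cross φ₁ φ₂ a b ≤ max (dist a (φ₁ y)) (dist (φ₂ y) b) :=
  ciInf_le ⟨0, by rintro r ⟨y, rfl⟩; exact le_max_of_le_left dist_nonneg⟩ y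

lemma exists_cross_lt (a : Z₁) (b : Z₂) {ε : ℝ} (hε : 0 < ε) :
    ∃ y, max (dist a (φ₁ y)) (dist (φ₂ y) b) < cross φ₁ φ₂ a b + ε :=
  exists_lt_of_ciInf_lt (lt_add_of_pos_right _ hε)

lemma max_add_le {a b ε : ℝ} (hε : 0 ≤ ε) : max a (b + ε) ≤ max a b + ε :=
  max_le (le_add_of_le_of_nonneg (le_max_left _ _) hε) (add_le_add (le_max_right _ _) le_rfl)

variable [IsUltrametricDist Z₁] [IsUltrametricDist Z₂]

lemma cross_le_left (a c : Z₁) (b : Z₂) :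
    cross φ₁ φ₂ a b ≤ max (dist a c) (cross φ₁ φ₂ c b) := by
  refine le_add_eps' fun ε hε => ?_
  obtain ⟨y, hy⟩ := exists_cross_lt φ₁ φ₂ c b hε
  calc cross φ₁ φ₂ a b ≤ max (dist a (φ₁ y)) (dist (φ₂ y) b) := cross_le _ _ _ _ _
    _ ≤ max (max (dist a c) (dist c (φ₁ y))) (dist (φ₂ y) b) :=
        max_le_max (dist_triangle_max _ _ _) le_rfl
    _ = max (dist a c) (max (dist c (φ₁ y)) (dist (φ₂ y) b)) := max_assoc _ _ _
    _ ≤ max (dist a c) (cross φ₁ φ₂ c b + ε) := max_le_max le_rfl hy.le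
    _ ≤ max (dist a c) (cross φ₁ φ₂ c b) + ε := max_add_le hε.le

lemma cross_le_right (a : Z₁) (b c : Z₂) :
    cross φ₁ φ₂ a b ≤ max (cross φ₁ φ₂ a c) (dist c b) := by
  refine le_add_eps' fun ε hε => ?_
  obtain ⟨y, hy⟩ := exists_cross_lt φ₁ φ₂ a c hε
  calc cross φ₁ φ₂ a b ≤ max (dist a (φ₁ y)) (dist (φ₂ y) b) := cross_le _ _ _ _ _
    _ ≤ max (dist a (φ₁ y)) (max (dist (φ₂ y) c) (dist c b)) :=
        max_le_max le_rfl (dist_triangle_max _ _ _)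
    _ = max (max (dist a (φ₁ y)) (dist (φ₂ y) c)) (dist c b) := (max_assoc _ _ _).symm
    _ ≤ max (cross φ₁ φ₂ a c + ε) (dist c b) := max_le_max hy.le le_rfl
    _ ≤ max (cross φ₁ φ₂ a c) (dist c b) + ε := by
        rw [max_comm, max_comm (cross φ₁ φ₂ a c)]; exact max_add_le hε.le

lemma left_le_cross (h₁ : Isometry φ₁) (h₂ : Isometry φ₂) (a b : Z₁) (c : Z₂) :
    dist a b ≤ max (cross φ₁ φ₂ a c) (cross φ₁ φ₂ b c) := by
  refine le_add_eps' fun ε hε => ?_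
  obtain ⟨y₁, hy₁⟩ := exists_cross_lt φ₁ φ₂ a c hε
  obtain ⟨y₂, hy₂⟩ := exists_cross_lt φ₁ φ₂ b c hε
  set M := max (cross φ₁ φ₂ a c) (cross φ₁ φ₂ b c) with hM
  have ha1 : dist a (φ₁ y₁) ≤ M + ε :=
    ((le_max_left _ _).trans hy₁.le).trans (add_le_add (le_max_left _ _) le_rfl)
  have ha2 : dist (φ₂ y₁) c ≤ M + ε :=
    ((le_max_right _ _).trans hy₁.le).trans (add_le_add (le_max_left _ _) le_rfl)
  have hb1 : dist b (φ₁ y₂) ≤ M + ε :=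
    ((le_max_left _ _).trans hy₂.le).trans (add_le_add (le_max_right _ _) le_rfl)
  have hb2 : dist (φ₂ y₂) c ≤ M + ε :=
    ((le_max_right _ _).trans hy₂.le).trans (add_le_add (le_max_right _ _) le_rfl)
  have k1 : dist (φ₁ y₁) (φ₁ y₂) ≤ max (dist (φ₂ y₁) c) (dist (φ₂ y₂) c) := by
    rw [h₁.dist_eq, ← h₂.dist_eq]
    simpa [dist_comm] using dist_triangle_max (φ₂ y₁) c (φ₂ y₂)
  calc dist a b ≤ max (dist a (φ₁ y₁)) (dist (φ₁ y₁) b) := dist_triangle_max _ _ _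
    _ ≤ max (dist a (φ₁ y₁)) (max (dist (φ₁ y₁) (φ₁ y₂)) (dist (φ₁ y₂) b)) :=
        max_le_max le_rfl (dist_triangle_max _ _ _)
    _ ≤ M + ε := by
        refine max_le ha1 (max_le (k1.trans (max_le ha2 hb2)) ?_)
        rwa [dist_comm]

lemma right_le_cross (h₁ : Isometry φ₁) (h₂ : Isometry φ₂) (a b : Z₂) (c : Z₁) :
    dist a b ≤ max (cross φ₁ φ₂ c a) (cross φ₁ φ₂ c b) := by
  refine le_add_eps' fun ε hε => ?_
  obtain ⟨y₁, hy₁⟩ := exists_cross_lt φ₁ φ₂ c a hε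
  obtain ⟨y₂, hy₂⟩ := exists_cross_lt φ₁ φ₂ c b hε
  set M := max (cross φ₁ φ₂ c a) (cross φ₁ φ₂ c b) with hM
  have ha1 : dist c (φ₁ y₁) ≤ M + ε :=
    ((le_max_left _ _).trans hy₁.le).trans (add_le_add (le_max_left _ _) le_rfl)
  have ha2 : dist (φ₂ y₁) a ≤ M + ε :=
    ((le_max_right _ _).trans hy₁.le).trans (add_le_add (le_max_left _ _) le_rfl)
  have hb1 : dist c (φ₁ y₂) ≤ M + ε :=
    ((le_max_left _ _).trans hy₂.le).trans (add_le_add (le_max_right _ _) le_rfl)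
  have hb2 : dist (φ₂ y₂) b ≤ M + ε :=
    ((le_max_right _ _).trans hy₂.le).trans (add_le_add (le_max_right _ _) le_rfl)
  have k1 : dist (φ₂ y₁) (φ₂ y₂) ≤ max (dist c (φ₁ y₁)) (dist c (φ₁ y₂)) := by
    rw [h₂.dist_eq, ← h₁.dist_eq]
    simpa [dist_comm] using dist_triangle_max (φ₁ y₁) c (φ₁ y₂)
  calc dist a b ≤ max (dist a (φ₂ y₁)) (dist (φ₂ y₁) b) := dist_triangle_max _ _ _
    _ ≤ max (dist a (φ₂ y₁)) (max (dist (φ₂ y₁) (φ₂ y₂)) (dist (φ₂ y₂) b)) :=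
        max_le_max le_rfl (dist_triangle_max _ _ _)
    _ ≤ M + ε := by
        refine max_le ?_ (max_le (k1.trans (max_le ha1 hb1)) hb2)
        rwa [dist_comm]

/-- The glue predistance on the sum type. -/
def glueDist : Z₁ ⊕ Z₂ → Z₁ ⊕ Z₂ → ℝ
  | .inl a, .inl b => dist a b
  | .inr a, .inr b => dist a b
  | .inl a, .inr b => cross φ₁ φ₂ a b
  | .inr a, .inl b => cross φ₁ φ₂ b a

lemma glueDist_nonneg : ∀ p q, 0 ≤ glueDist φ₁ φ₂ p q
  | .inl _, .inl _ => dist_nonneg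
  | .inr _, .inr _ => dist_nonneg
  | .inl _, .inr _ => cross_nonneg _ _ _ _
  | .inr _, .inl _ => cross_nonneg _ _ _ _

lemma glueDist_self : ∀ p, glueDist φ₁ φ₂ p p = 0
  | .inl _ => dist_self _
  | .inr _ => dist_self _

lemma glueDist_comm : ∀ p q, glueDist φ₁ φ₂ p q = glueDist φ₁ φ₂ q p
  | .inl _, .inl _ => dist_comm _ _
  | .inr _, .inr _ => dist_comm _ _
  | .inl _, .inr _ => rfl
  | .inr _, .inl _ => rfl

lemma glueDist_ultra (h₁ : Isometry φ₁) (h₂ : Isometry φ₂) :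
    ∀ p q r, glueDist φ₁ φ₂ p r ≤ max (glueDist φ₁ φ₂ p q) (glueDist φ₁ φ₂ q r)
  | .inl a, .inl b, .inl c => dist_triangle_max a b c
  | .inl a, .inl b, .inr c =>
      show cross φ₁ φ₂ a c ≤ max (dist a b) (cross φ₁ φ₂ b c) from cross_le_left φ₁ φ₂ a b c
  | .inl a, .inr b, .inl c =>
      show dist a c ≤ max (cross φ₁ φ₂ a b) (cross φ₁ φ₂ c b) from left_le_cross φ₁ φ₂ h₁ h₂ a c b
  | .inl a, .inr b, .inr c =>
      show cross φ₁ φ₂ a c ≤ max (cross φ₁ φ₂ a b) (dist b c) from cross_le_right φ₁ φ₂ a c b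
  | .inr a, .inl b, .inl c =>
      show cross φ₁ φ₂ c a ≤ max (cross φ₁ φ₂ b a) (dist b c) from
        (cross_le_left φ₁ φ₂ c b a).trans (le_of_eq (by rw [max_comm, dist_comm]))
  | .inr a, .inl b, .inr c =>
      show dist a c ≤ max (cross φ₁ φ₂ b a) (cross φ₁ φ₂ b c) from right_le_cross φ₁ φ₂ h₁ h₂ a c b
  | .inr a, .inr b, .inl c =>
      show cross φ₁ φ₂ c a ≤ max (dist a b) (cross φ₁ φ₂ c b) from
        (cross_le_right φ₁ φ₂ c a b).trans (le_of_eq (by rw [max_comm, dist_comm]))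
  | .inr a, .inr b, .inr c => dist_triangle_max a b c


/-- The glue pseudometric on the sum. -/
def gluePseudoMetric (h₁ : Isometry φ₁) (h₂ : Isometry φ₂) : PseudoMetricSpace (Z₁ ⊕ Z₂) where
  dist := glueDist φ₁ φ₂
  dist_self := glueDist_self φ₁ φ₂
  dist_comm := glueDist_comm φ₁ φ₂
  dist_triangle p q r :=
    (glueDist_ultra φ₁ φ₂ h₁ h₂ p q r).trans
      (max_le_add_of_nonneg (glueDist_nonneg φ₁ φ₂ p q) (glueDist_nonneg φ₁ φ₂ q r))

/-- The glue space: separation quotient of the glue pseudometric. -/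
def Space (h₁ : Isometry φ₁) (h₂ : Isometry φ₂) : Type _ :=
  @SeparationQuotient _ (gluePseudoMetric φ₁ φ₂ h₁ h₂).toUniformSpace.toTopologicalSpace

instance (h₁ : Isometry φ₁) (h₂ : Isometry φ₂) : MetricSpace (Space φ₁ φ₂ h₁ h₂) :=
  inferInstanceAs <| MetricSpace <|
    @SeparationQuotient _ (gluePseudoMetric φ₁ φ₂ h₁ h₂).toUniformSpace.toTopologicalSpace

/-- Left embedding into the glue space. -/
def inl' (h₁ : Isometry φ₁) (h₂ : Isometry φ₂) (a : Z₁) : Space φ₁ φ₂ h₁ h₂ :=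
  @SeparationQuotient.mk _ (gluePseudoMetric φ₁ φ₂ h₁ h₂).toUniformSpace.toTopologicalSpace
    (Sum.inl a)

/-- Right embedding into the glue space. -/
def inr' (h₁ : Isometry φ₁) (h₂ : Isometry φ₂) (b : Z₂) : Space φ₁ φ₂ h₁ h₂ :=
  @SeparationQuotient.mk _ (gluePseudoMetric φ₁ φ₂ h₁ h₂).toUniformSpace.toTopologicalSpace
    (Sum.inr b)

lemma dist_mk' (h₁ : Isometry φ₁) (h₂ : Isometry φ₂) (p q : Z₁ ⊕ Z₂) :
    dist (@SeparationQuotient.mk _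
        (gluePseudoMetric φ₁ φ₂ h₁ h₂).toUniformSpace.toTopologicalSpace p)
      (@SeparationQuotient.mk _
        (gluePseudoMetric φ₁ φ₂ h₁ h₂).toUniformSpace.toTopologicalSpace q) =
      glueDist φ₁ φ₂ p q :=
  @SeparationQuotient.dist_mk _ (gluePseudoMetric φ₁ φ₂ h₁ h₂) p q

lemma isometry_inl' (h₁ : Isometry φ₁) (h₂ : Isometry φ₂) : Isometry (inl' φ₁ φ₂ h₁ h₂) :=
  Isometry.of_dist_eq fun a b => dist_mk' φ₁ φ₂ h₁ h₂ (Sum.inl a) (Sum.inl b)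

lemma isometry_inr' (h₁ : Isometry φ₁) (h₂ : Isometry φ₂) : Isometry (inr' φ₁ φ₂ h₁ h₂) :=
  Isometry.of_dist_eq fun a b => dist_mk' φ₁ φ₂ h₁ h₂ (Sum.inr a) (Sum.inr b)

lemma glue_eq (h₁ : Isometry φ₁) (h₂ : Isometry φ₂) (y : Y) :
    inl' φ₁ φ₂ h₁ h₂ (φ₁ y) = inr' φ₁ φ₂ h₁ h₂ (φ₂ y) := by
  refine eq_of_dist_eq_zero ?_
  rw [show dist (inl' φ₁ φ₂ h₁ h₂ (φ₁ y)) (inr' φ₁ φ₂ h₁ h₂ (φ₂ y)) =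
      glueDist φ₁ φ₂ (Sum.inl (φ₁ y)) (Sum.inr (φ₂ y)) from
    dist_mk' φ₁ φ₂ h₁ h₂ (Sum.inl (φ₁ y)) (Sum.inr (φ₂ y))]
  refine le_antisymm ?_ (glueDist_nonneg φ₁ φ₂ _ _)
  simpa [glueDist] using cross_le φ₁ φ₂ (φ₁ y) (φ₂ y) y

end UltraGlue

/-- Separation quotients of ultrametric pseudometric spaces are ultrametric. -/
lemma sepQuotient_ultra {α : Type*} [PseudoMetricSpace α] [IsUltrametricDist α] :
    IsUltrametricDist (SeparationQuotient α) := by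
  constructor
  intro p q r
  obtain ⟨x, rfl⟩ := SeparationQuotient.surjective_mk p
  obtain ⟨y, rfl⟩ := SeparationQuotient.surjective_mk q
  obtain ⟨z, rfl⟩ := SeparationQuotient.surjective_mk r
  simpa only [SeparationQuotient.dist_mk] using dist_triangle_max x y z

namespace UltraGlue

variable {Y Z₁ Z₂ : Type*} [MetricSpace Y] [MetricSpace Z₁] [MetricSpace Z₂] [Nonempty Y]
variable [IsUltrametricDist Z₁] [IsUltrametricDist Z₂]
variable (φ₁ : Y → Z₁) (φ₂ : Y → Z₂)

instance (h₁ : Isometry φ₁) (h₂ : Isometry φ₂) : IsUltrametricDist (Space φ₁ φ₂ h₁ h₂) := by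
  letI := gluePseudoMetric φ₁ φ₂ h₁ h₂
  haveI : IsUltrametricDist (Z₁ ⊕ Z₂) := ⟨glueDist_ultra φ₁ φ₂ h₁ h₂⟩
  exact @sepQuotient_ultra _ (gluePseudoMetric φ₁ φ₂ h₁ h₂) this

end UltraGlue

/-- Completions of ultrametric spaces are ultrametric. -/
lemma completion_ultra {α : Type*} [MetricSpace α] [IsUltrametricDist α] :
    IsUltrametricDist (UniformSpace.Completion α) := by
  constructor
  intro x y z
  refine UniformSpace.Completion.induction_on₃ x y z ?_ ?_
  · refine isClosed_le ?_ (Continuous.max ?_ ?_) <;>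
      apply_rules [UniformSpace.Completion.continuous_dist, Continuous.fst, Continuous.snd,
        continuous_id, Continuous.comp]
  · intro a b c
    rw [UniformSpace.Completion.dist_eq, UniformSpace.Completion.dist_eq,
      UniformSpace.Completion.dist_eq]
    exact dist_triangle_max a b c

/-- Inductive limits of ultrametric spaces are ultrametric. -/
lemma inductiveLimit_ultra {X : ℕ → Type*} [∀ n, MetricSpace (X n)]
    (hu : ∀ n, IsUltrametricDist (X n)) {f : ∀ n, X n → X (n + 1)} (I : ∀ n, Isometry (f n)) :
    IsUltrametricDist (Metric.InductiveLimit I) := by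
  letI := Metric.inductivePremetric I
  haveI : IsUltrametricDist (Σ n, X n) := by
    constructor
    intro x y z
    have hx : x.1 ≤ max (max x.1 y.1) z.1 := le_max_of_le_left (le_max_left _ _)
    have hy : y.1 ≤ max (max x.1 y.1) z.1 := le_max_of_le_left (le_max_right _ _)
    have hz : z.1 ≤ max (max x.1 y.1) z.1 := le_max_right _ _
    show Metric.inductiveLimitDist f x z ≤
      max (Metric.inductiveLimitDist f x y) (Metric.inductiveLimitDist f y z)
    rw [Metric.inductiveLimitDist_eq_dist I x z _ hx hz,
      Metric.inductiveLimitDist_eq_dist I x y _ hx hy,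
      Metric.inductiveLimitDist_eq_dist I y z _ hy hz]
    haveI := hu (max (max x.1 y.1) z.1)
    exact dist_triangle_max _ _ _
  exact @sepQuotient_ultra _ (Metric.inductivePremetric I) this

open Metric Set

/-- The ultrametric Gromov–Hausdorff distance: infimum of Hausdorff distances between
isometric copies of `X` and `Y` inside a common ultrametric space. -/
noncomputable def GHuDist (X Y : Type*) [MetricSpace X] [MetricSpace Y] : ℝ :=
  sInf { r : ℝ | ∃ (Z : Type) (_ : MetricSpace Z), IsUltrametricDist Z ∧
    ∃ (i : X → Z) (j : Y → Z), Isometry i ∧ Isometry j ∧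
      Metric.hausdorffDist (Set.range i) (Set.range j) = r }

section GHuAPI

variable (X Y : Type*) [MetricSpace X] [MetricSpace Y]

lemma GHuDist_bddBelow : BddBelow { r : ℝ | ∃ (Z : Type) (_ : MetricSpace Z),
    IsUltrametricDist Z ∧ ∃ (i : X → Z) (j : Y → Z), Isometry i ∧ Isometry j ∧
      Metric.hausdorffDist (Set.range i) (Set.range j) = r } := by
  refine ⟨0, ?_⟩
  rintro r ⟨Z, mZ, hZ, i, j, hi, hj, rfl⟩
  exact hausdorffDist_nonneg

lemma GHuDist_le {Z : Type} (mZ : MetricSpace Z) (uZ : IsUltrametricDist Z)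
    {i : X → Z} {j : Y → Z} (hi : Isometry i) (hj : Isometry j) :
    GHuDist X Y ≤ Metric.hausdorffDist (Set.range i) (Set.range j) :=
  csInf_le (GHuDist_bddBelow X Y) ⟨Z, mZ, uZ, i, j, hi, hj, rfl⟩

lemma GHuDist_nonneg : 0 ≤ GHuDist X Y := by
  refine Real.sInf_nonneg ?_
  rintro r ⟨Z, mZ, hZ, i, j, hi, hj, rfl⟩
  exact hausdorffDist_nonneg

end GHuAPI

section GHuAPI2

variable (X Y : Type) [MetricSpace X] [MetricSpace Y] [Nonempty X] [Nonempty Y]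
  [IsUltrametricDist X] [IsUltrametricDist Y]

lemma GHuSet_nonempty : Set.Nonempty { r : ℝ | ∃ (Z : Type) (_ : MetricSpace Z),
    IsUltrametricDist Z ∧ ∃ (i : X → Z) (j : Y → Z), Isometry i ∧ Isometry j ∧
      Metric.hausdorffDist (Set.range i) (Set.range j) = r } := by
  have x₀ : X := Classical.arbitrary X
  have y₀ : Y := Classical.arbitrary Y
  let φ₁ : PUnit.{1} → X := fun _ => x₀
  let φ₂ : PUnit.{1} → Y := fun _ => y₀
  have h₁ : Isometry φ₁ := Isometry.of_dist_eq fun a b => by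
    rw [Subsingleton.elim a b]; simp
  have h₂ : Isometry φ₂ := Isometry.of_dist_eq fun a b => by
    rw [Subsingleton.elim a b]; simp
  exact ⟨_, UltraGlue.Space φ₁ φ₂ h₁ h₂, inferInstance, inferInstance,
    UltraGlue.inl' φ₁ φ₂ h₁ h₂, UltraGlue.inr' φ₁ φ₂ h₁ h₂,
    UltraGlue.isometry_inl' φ₁ φ₂ h₁ h₂, UltraGlue.isometry_inr' φ₁ φ₂ h₁ h₂, rfl⟩

lemma exists_witness_lt {c : ℝ} (h : GHuDist X Y < c) :
    ∃ (Z : Type) (mZ : MetricSpace Z), IsUltrametricDist Z ∧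
      ∃ (i : X → Z) (j : Y → Z), Isometry i ∧ Isometry j ∧
        Metric.hausdorffDist (Set.range i) (Set.range j) < c := by
  obtain ⟨r, hr, hrc⟩ := exists_lt_of_csInf_lt (GHuSet_nonempty X Y) h
  obtain ⟨Z, mZ, uZ, i, j, hi, hj, rfl⟩ := hr
  exact ⟨Z, mZ, uZ, i, j, hi, hj, hrc⟩

end GHuAPI2

theorem GHuDist_triangle (X Y Z : Type) [MetricSpace X] [MetricSpace Y] [MetricSpace Z]
    [Nonempty X] [Nonempty Y] [Nonempty Z] [CompactSpace X] [CompactSpace Y]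
    [IsUltrametricDist X] [IsUltrametricDist Y] [IsUltrametricDist Z] :
    GHuDist X Z ≤ GHuDist X Y + GHuDist Y Z := by
  refine le_add_eps' fun ε hε => ?_
  obtain ⟨W₁, mW₁, uW₁, i₁, j₁, hi₁, hj₁, hd₁⟩ :=
    exists_witness_lt X Y (lt_add_of_pos_right (GHuDist X Y) (half_pos hε))
  obtain ⟨W₂, mW₂, uW₂, i₂, j₂, hi₂, hj₂, hd₂⟩ :=
    exists_witness_lt Y Z (lt_add_of_pos_right (GHuDist Y Z) (half_pos hε))
  haveI := uW₁; haveI := uW₂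
  set a := UltraGlue.inl' j₁ i₂ hj₁ hi₂ ∘ i₁ with ha_def
  set b := UltraGlue.inr' j₁ i₂ hj₁ hi₂ ∘ j₂ with hb_def
  set mL := UltraGlue.inl' j₁ i₂ hj₁ hi₂ ∘ j₁ with hmL_def
  have ha : Isometry a := (UltraGlue.isometry_inl' j₁ i₂ hj₁ hi₂).comp hi₁
  have hb : Isometry b := (UltraGlue.isometry_inr' j₁ i₂ hj₁ hi₂).comp hj₂
  have hmL : Isometry mL := (UltraGlue.isometry_inl' j₁ i₂ hj₁ hi₂).comp hj₁
  have hmid : range mL = range (UltraGlue.inr' j₁ i₂ hj₁ hi₂ ∘ i₂) := by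
    rw [hmL_def, show UltraGlue.inl' j₁ i₂ hj₁ hi₂ ∘ j₁ = UltraGlue.inr' j₁ i₂ hj₁ hi₂ ∘ i₂
      from funext fun y => UltraGlue.glue_eq j₁ i₂ hj₁ hi₂ y]
  have e1 : hausdorffDist (range a) (range mL) = hausdorffDist (range i₁) (range j₁) := by
    rw [ha_def, hmL_def, range_comp, range_comp,
      hausdorffDist_image (UltraGlue.isometry_inl' j₁ i₂ hj₁ hi₂)]
  have e2 : hausdorffDist (range mL) (range b) = hausdorffDist (range i₂) (range j₂) := by
    rw [hmid, hb_def, range_comp, range_comp,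
      hausdorffDist_image (UltraGlue.isometry_inr' j₁ i₂ hj₁ hi₂)]
  have fin1 : EMetric.hausdorffEdist (range a) (range mL) ≠ ⊤ :=
    hausdorffEdist_ne_top_of_nonempty_of_bounded (range_nonempty _) (range_nonempty _)
      (isCompact_range ha.continuous).isBounded (isCompact_range hmL.continuous).isBounded
  have tri : hausdorffDist (range a) (range b) ≤
      hausdorffDist (range a) (range mL) + hausdorffDist (range mL) (range b) :=
    hausdorffDist_triangle fin1
  have key := GHuDist_le X Z inferInstance inferInstance ha hb
  rw [e1, e2] at tri
  have := key.trans tri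
  linarith

/-- Auxiliary structure: an ambient ultrametric space containing isometric copies of two
given spaces, at controlled Hausdorff distance. -/
structure UAux (A B : Type) [MetricSpace A] [MetricSpace B] (d : ℝ) : Type 1 where
  Space : Type
  metric : MetricSpace Space
  ultra : IsUltrametricDist Space
  embedL : A → Space
  embedR : B → Space
  isomL : Isometry embedL
  isomR : Isometry embedR
  close : Metric.hausdorffDist (Set.range embedL) (Set.range embedR) < d

attribute [local instance] UAux.metric UAux.ultra

section Chain

variable {A : ℕ → Type} {Z : ℕ → Type}

/-- The chain of glued ultrametric spaces. -/
noncomputable def uChain (d : ℕ → ℝ) (mA : ∀ n, MetricSpace (A n)) (mZ : ∀ n, MetricSpace (Z n))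
    (uZ : ∀ n, letI := mZ n; IsUltrametricDist (Z n))
    (neA : ∀ n, Nonempty (A n))
    (i : ∀ n, A n → Z n) (j : ∀ n, A (n + 1) → Z n)
    (hi : ∀ n, letI := mA n; letI := mZ n; Isometry (i n))
    (hj : ∀ n, letI := mA (n + 1); letI := mZ n; Isometry (j n))
    (hd : ∀ n, letI := mZ n;
      Metric.hausdorffDist (Set.range (i n)) (Set.range (j n)) < d n) :
    ∀ n : ℕ, @UAux (A n) (A (n + 1)) (mA n) (mA (n + 1)) (d n)
  | 0 =>
      letI := mA 0; letI := mA 1; letI := mZ 0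
      { Space := Z 0, metric := mZ 0, ultra := uZ 0, embedL := i 0, embedR := j 0,
        isomL := hi 0, isomR := hj 0, close := hd 0 }
  | (n + 1) =>
      let P := uChain d mA mZ uZ neA i j hi hj hd n
      letI := mA (n + 1); letI := mA (n + 2); letI := mZ (n + 1)
      letI := P.metric
      haveI := P.ultra; haveI := uZ (n + 1); haveI := neA (n + 1)
      { Space := UltraGlue.Space P.embedR (i (n + 1)) P.isomR (hi (n + 1))
        metric := inferInstance
        ultra := inferInstance
        embedL := UltraGlue.inr' P.embedR (i (n + 1)) P.isomR (hi (n + 1)) ∘ i (n + 1)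
        embedR := UltraGlue.inr' P.embedR (i (n + 1)) P.isomR (hi (n + 1)) ∘ j (n + 1)
        isomL := (UltraGlue.isometry_inr' _ _ _ _).comp (hi (n + 1))
        isomR := (UltraGlue.isometry_inr' _ _ _ _).comp (hj (n + 1))
        close := by
          rw [Set.range_comp, Set.range_comp,
            Metric.hausdorffDist_image (UltraGlue.isometry_inr' _ _ _ _)]
          exact hd (n + 1) }

end Chain

open Filter

/-- Completeness of the space of compact ultrametric spaces with the ultrametric
Gromov–Hausdorff distance: every Cauchy sequence converges. -/
theorem GHu_complete (X : ℕ → Type) (m : ∀ n, MetricSpace (X n))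
    (hc : ∀ n, letI := m n; CompactSpace (X n)) (hne : ∀ n, Nonempty (X n))
    (hu : ∀ n, letI := m n; IsUltrametricDist (X n))
    (hcauchy : ∀ ε : ℝ, 0 < ε → ∃ N : ℕ, ∀ i ≥ N, ∀ j ≥ N,
      (letI := m i; letI := m j; GHuDist (X i) (X j)) < ε) :
    ∃ (L : Type) (_ : MetricSpace L), CompactSpace L ∧ Nonempty L ∧ IsUltrametricDist L ∧
      Tendsto (fun n => letI := m n; GHuDist (X n) L) atTop (nhds 0) := by
  classical
  letI : ∀ n, MetricSpace (X n) := m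
  haveI hC : ∀ n, CompactSpace (X n) := hc
  haveI hN : ∀ n, Nonempty (X n) := hne
  haveI hU : ∀ n, IsUltrametricDist (X n) := hu
  -- extract a rapidly Cauchy subsequence
  have hpow : ∀ k : ℕ, (0 : ℝ) < (1 / 2) ^ k := fun k => by positivity
  choose N hNspec using fun k => hcauchy ((1 / 2) ^ k) (hpow k)
  let u : ℕ → ℕ := fun n => Nat.rec (N 0) (fun k uk => max (uk + 1) (N (k + 1))) n
  have hu1 : ∀ n, u n < u (n + 1) := fun n =>
    lt_of_lt_of_le (Nat.lt_succ_self _) (le_max_left _ _)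
  have humono : StrictMono u := strictMono_nat_of_lt_succ hu1
  have hu2 : ∀ n, N n ≤ u n := fun n => by
    cases n with
    | zero => exact le_rfl
    | succ k => exact le_max_right _ _
  have hud : ∀ n, GHuDist (X (u n)) (X (u (n + 1))) < (1 / 2) ^ n := fun n =>
    hNspec n _ (hu2 n) _ (le_trans (hu2 n) (hu1 n).le)
  -- choose witness ambient ultrametric spaces for consecutive terms of the subsequence
  choose Zc mZc uZc ic jc hic hjc hdc using
    fun n => exists_witness_lt (X (u n)) (X (u (n + 1))) (hud n)
  -- build the chain of glued spaces
  let chain := uChain (A := fun n => X (u n)) (fun n => (1 / 2) ^ n) (fun n => m (u n)) mZc uZc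
    (fun n => hne _) ic jc hic hjc hdc
  -- the canonical isometric embeddings along the chain
  have E : ∀ n, UltraGlue.Space (chain n).embedR (ic (n + 1)) (chain n).isomR (hic (n + 1)) =
      (chain (n + 1)).Space := fun n => by dsimp only [chain, uChain]
  let c : ∀ n, UltraGlue.Space (chain n).embedR (ic (n + 1)) (chain n).isomR (hic (n + 1)) →
      (chain (n + 1)).Space := fun n => cast (E n)
  have icast : ∀ n, Isometry (c n) := fun n x y => by dsimp only [chain, uChain]; exact rfl
  let f : ∀ n, (chain n).Space → (chain (n + 1)).Space := fun n =>
    c n ∘ UltraGlue.inl' (chain n).embedR (ic (n + 1)) (chain n).isomR (hic (n + 1))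
  have I : ∀ n, Isometry (f n) := fun n =>
    (icast n).comp (UltraGlue.isometry_inl' _ _ _ _)
  -- coherence: the two copies of `X (u (n+1))` coincide
  have hcoh : ∀ n, f n ∘ (chain n).embedR = (chain (n + 1)).embedL := by
    intro n
    funext y
    show c n (UltraGlue.inl' (chain n).embedR (ic (n + 1)) (chain n).isomR (hic (n + 1))
      ((chain n).embedR y)) = (chain (n + 1)).embedL y
    rw [UltraGlue.glue_eq (chain n).embedR (ic (n + 1)) (chain n).isomR (hic (n + 1)) y]
    dsimp only [chain, uChain]
    exact rfl
  -- the inductive limit and its completion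
  let Z0 := Metric.InductiveLimit I
  haveI : IsUltrametricDist Z0 := inductiveLimit_ultra (fun n => (chain n).ultra) I
  let Z := UniformSpace.Completion Z0
  haveI : IsUltrametricDist Z := completion_ultra
  let Φ := Metric.toInductiveLimit I
  let coeZ := ((↑) : Z0 → Z)
  let g : ∀ n, X (u n) → Z := fun n => coeZ ∘ Φ n ∘ (chain n).embedL
  have isomg : ∀ n, Isometry (g n) := fun n =>
    UniformSpace.Completion.coe_isometry.comp
      ((Metric.toInductiveLimit_isometry I n).comp (chain n).isomL)
  let X2 : ℕ → Set Z := fun n => Set.range (g n)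
  -- consecutive images are close
  have X2succ : ∀ n, X2 (n + 1) = Set.range (coeZ ∘ Φ n ∘ (chain n).embedR) := by
    intro n
    show Set.range (coeZ ∘ Φ (n + 1) ∘ (chain (n + 1)).embedL) = _
    rw [← hcoh n, show Φ (n + 1) ∘ f n ∘ (chain n).embedR = (Φ (n + 1) ∘ f n) ∘ (chain n).embedR
        from rfl,
      Metric.toInductiveLimit_commute I n]
  have D2 : ∀ n, Metric.hausdorffDist (X2 n) (X2 (n + 1)) < (1 / 2) ^ n := by
    intro n
    rw [X2succ n]
    show Metric.hausdorffDist (Set.range ((coeZ ∘ Φ n) ∘ (chain n).embedL))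
      (Set.range ((coeZ ∘ Φ n) ∘ (chain n).embedR)) < _
    rw [Set.range_comp, Set.range_comp,
      Metric.hausdorffDist_image
        (UniformSpace.Completion.coe_isometry.comp (Metric.toInductiveLimit_isometry I n))]
    exact (chain n).close
  -- view the images in the hyperspace of nonempty compacts
  let X3 : ℕ → TopologicalSpace.NonemptyCompacts Z := fun n =>
    ⟨⟨X2 n, isCompact_range (isomg n).continuous⟩, Set.range_nonempty _⟩
  have hX3 : CauchySeq X3 := by
    refine cauchySeq_of_le_geometric (1 / 2) 1 (by norm_num) fun n => ?_
    rw [one_mul]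
    exact le_of_lt (by rw [Metric.NonemptyCompacts.dist_eq]; exact D2 n)
  obtain ⟨K, hK⟩ := cauchySeq_tendsto_of_complete hX3
  -- the limit space
  haveI hKne : Nonempty ↥(K : Set Z) :=
    Nonempty.intro ⟨K.nonempty.choose, K.nonempty.choose_spec⟩
  refine ⟨↥(K : Set Z), inferInstance, isCompact_iff_compactSpace.mp K.isCompact,
    hKne, inferInstance, ?_⟩
  -- the key estimate for the subsequence
  have key : ∀ n, GHuDist (X (u n)) ↥(K : Set Z) ≤ dist (X3 n) K := by
    intro n
    have h1 : GHuDist (X (u n)) ↥(K : Set Z) ≤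
        Metric.hausdorffDist (Set.range (g n)) (Set.range (Subtype.val : ↥(K : Set Z) → Z)) :=
      GHuDist_le _ _ inferInstance inferInstance (isomg n) isometry_subtype_coe
    rw [Subtype.range_coe] at h1
    exact h1
  -- conclude
  rw [Metric.tendsto_atTop]
  intro ε hε
  obtain ⟨M1, hM1⟩ := Metric.tendsto_atTop.1 hK (ε / 2) (half_pos hε)
  obtain ⟨N₂, hN₂⟩ := hcauchy (ε / 2) (half_pos hε)
  refine ⟨N₂, fun n hn => ?_⟩
  set mm := max M1 N₂ with hmm
  have humm : N₂ ≤ u mm := le_trans (le_max_right _ _) (humono.le_apply)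
  have tri : GHuDist (X n) ↥(K : Set Z) ≤
      GHuDist (X n) (X (u mm)) + GHuDist (X (u mm)) ↥(K : Set Z) :=
    GHuDist_triangle (X n) (X (u mm)) ↥(K : Set Z)
  have b1 : GHuDist (X n) (X (u mm)) < ε / 2 := hN₂ n hn (u mm) humm
  have b2 : GHuDist (X (u mm)) ↥(K : Set Z) < ε / 2 :=
    lt_of_le_of_lt (key mm) (hM1 mm (le_max_left _ _))
  have hnn : (0 : ℝ) ≤ GHuDist (X n) ↥(K : Set Z) := GHuDist_nonneg _ _
  rw [Real.dist_eq, sub_zero, abs_of_nonneg hnn]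
  linarith
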